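/- Let n ≥ 3 and k ≥ 0 be integers, let 0 < ε < 1, and let σ, a, b be real numbers with b ≠ 0. Define α : (0, ∞) → ℝ by α(ρ) = a ρ^k + b ρ^{2−n−k}. If α′(1) = σ α(1) and α′(ε) = −σ α(ε), then (ε − ε^{2k+n−1}) σ² − ((k+n−2) ε^{2k+n−1} + k ε^{2k+n−2} + k ε + (k+n−2)) σ + k(k+n−2)(1 − ε^{2k+n−2}) = 0. -/

import Mathlib

/-- The Steklov boundary conditions on the annulus `{ε < ‖x‖ < 1} ⊆ ℝⁿ` for the radial
function `α(ρ) = a ρ^k + b ρ^{2-n-k}` force `σ` to satisfy the quadratic equation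
`(ε - ε^{2k+n-1}) σ² - ((k+n-2) ε^{2k+n-1} + k ε^{2k+n-2} + k ε + (k+n-2)) σ
  + k (k+n-2) (1 - ε^{2k+n-2}) = 0`. -/
theorem stmt4 {n k : ℕ} (hn : 3 ≤ n) (ε σ a b : ℝ) (hε : 0 < ε) (hε1 : ε < 1)
    (hb : b ≠ 0) (α : ℝ → ℝ)
    (hα : ∀ ρ : ℝ, 0 < ρ → α ρ = a * ρ ^ (k : ℤ) + b * ρ ^ ((2 : ℤ) - n - k))
    (h1 : deriv α 1 = σ * α 1)
    (h2 : deriv α ε = -σ * α ε) :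
    (ε - ε ^ (2 * k + n - 1)) * σ ^ 2
      - (((k : ℝ) + n - 2) * ε ^ (2 * k + n - 1) + (k : ℝ) * ε ^ (2 * k + n - 2)
          + (k : ℝ) * ε + ((k : ℝ) + n - 2)) * σ
      + (k : ℝ) * ((k : ℝ) + n - 2) * (1 - ε ^ (2 * k + n - 2)) = 0 := by
  obtain ⟨p, rfl⟩ : ∃ p, n = p + 3 := ⟨n - 3, by omega⟩
  have hεne : ε ≠ 0 := hε.ne'
  have hd : ∀ x : ℝ, 0 < x → deriv α x =
      a * ((k : ℝ) * x ^ ((k:ℤ) - 1)) + b * ((((2:ℤ) - (p+3) - k : ℤ) : ℝ) * x ^ ((2:ℤ) - (p+3) - k - 1)) := by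
    intro x hx
    have hA := (hasDerivAt_zpow (k:ℤ) x (Or.inl hx.ne')).const_mul a
    have hB := (hasDerivAt_zpow ((2:ℤ) - (p+3) - k) x (Or.inl hx.ne')).const_mul b
    have hAB := hA.add hB
    have : HasDerivAt α (a * ((k : ℝ) * x ^ ((k:ℤ) - 1)) + b * ((((2:ℤ) - (p+3) - k : ℤ) : ℝ) * x ^ ((2:ℤ) - (p+3) - k - 1))) x := by
      refine hAB.congr_of_eventuallyEq ?_
      filter_upwards [isOpen_Ioi.mem_nhds hx] with y hy using hα y hy
    exact this.deriv
  -- equation at 1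
  rw [hd 1 one_pos, hα 1 one_pos] at h1
  simp only [one_zpow, mul_one] at h1
  -- zpow to nat pow / division
  have hz1 : ε ^ ((k:ℤ) - 1) = ε ^ k / ε := by
    rw [zpow_sub₀ hεne, zpow_natCast, zpow_one]
  have hz2 : ε ^ ((2:ℤ) - (p+3) - k) = ε ^ 2 / ε ^ (k + p + 3) := by
    rw [show (2:ℤ) - (p+3) - k = ((2:ℕ):ℤ) - ((k + p + 3 : ℕ):ℤ) by push_cast; ring,
      zpow_sub₀ hεne, zpow_natCast, zpow_natCast]
  have hz3 : ε ^ ((2:ℤ) - (p+3) - k - 1) = ε / ε ^ (k + p + 3) := by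
    rw [show (2:ℤ) - (p+3) - k - 1 = ((1:ℕ):ℤ) - ((k + p + 3 : ℕ):ℤ) by push_cast; ring,
      zpow_sub₀ hεne, zpow_natCast, zpow_natCast, pow_one]
  rw [hd ε hε, hα ε hε] at h2
  push_cast at h1 h2 hz2 hz3
  rw [hz1, hz2, hz3, zpow_natCast] at h2
  have hpne : ε ^ (k + p + 3) ≠ 0 := pow_ne_zero _ hεne
  field_simp at h2
  have h2' : a * (↑k * ε ^ k) * ε ^ (k + p + 3) + b * ((2 - ((p:ℝ) + 3) - ↑k) * ε) * ε =
      -(σ * (a * ε ^ k * ε ^ (k + p + 3) + b * ε ^ 2) * ε) :=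
    mul_right_cancel₀ hpne (by linear_combination ε ^ (k + p + 3) * h2)
  set m : ℝ := (k:ℝ) + p + 1 with hm
  have hD : b * ((↑k - σ) * ε ^ 2 * (σ * ε - m) + ε ^ k * ε ^ (k + p + 3) * (↑k + σ * ε) * (m + σ)) = 0 := by
    linear_combination (↑k - σ) * h2' - ε ^ k * ε ^ (k + p + 3) * ((k:ℝ) + σ * ε) * h1
  have hD0 : (↑k - σ) * ε ^ 2 * (σ * ε - m) + ε ^ k * ε ^ (k + p + 3) * (↑k + σ * ε) * (m + σ) = 0 :=
    (mul_eq_zero.mp hD).resolve_left hb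
  rw [show 2 * k + (p + 3) - 1 = k + k + (p + 2) by omega,
    show 2 * k + (p + 3) - 2 = k + k + (p + 1) by omega]
  have key : ε ^ 2 * ((ε - ε ^ (k + k + (p + 2))) * σ ^ 2 -
        ((↑k + ↑(p + 3) - 2) * ε ^ (k + k + (p + 2)) + ↑k * ε ^ (k + k + (p + 1)) + ↑k * ε +
            (↑k + ↑(p + 3) - 2)) * σ +
      ↑k * (↑k + ↑(p + 3) - 2) * (1 - ε ^ (k + k + (p + 1)))) = 0 := by
    push_cast
    linear_combination -hD0
  have := (mul_eq_zero.mp key).resolve_left (pow_ne_zero 2 hεne)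
  linarith [this]
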